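/- Let n ≥ 1, let a_i < b_i for i = 1, …, n, and let K = Π_{i=1}^n [a_i, b_i] ⊂ ℝ^n. Then for every ε > 0 there exists a C² function θ : ℝ^n → ℝ that is strictly positive on K and satisfies −4Δθ(x) ≥ (Σ_{i=1}^n 4π²/(b_i−a_i)² − ε) · θ(x) for all x ∈ K. -/

import Mathlib

open Real

/-- The Euclidean Laplacian of `f` at `x`: the trace of the second derivative. -/
noncomputable def lap {n : ℕ} (f : EuclideanSpace ℝ (Fin n) → ℝ)
    (x : EuclideanSpace ℝ (Fin n)) : ℝ :=
  ∑ i : Fin n, fderiv ℝ (fderiv ℝ f) x (EuclideanSpace.single i 1) (EuclideanSpace.single i 1)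

section AuxProof
open Finset

section aux

variable {n : ℕ} (k c : Fin n → ℝ)

noncomputable def hfun (i : Fin n) (t : ℝ) : ℝ := Real.cos (k i * (t - c i))
noncomputable def hfun1 (i : Fin n) (t : ℝ) : ℝ := -(Real.sin (k i * (t - c i)) * k i)
noncomputable def hfun2 (i : Fin n) (t : ℝ) : ℝ := -(Real.cos (k i * (t - c i)) * k i * k i)

lemma hasDerivAt_inner (i : Fin n) (t : ℝ) :
    HasDerivAt (fun t => k i * (t - c i)) (k i) t := by
  simpa using ((hasDerivAt_id t).sub_const (c i)).const_mul (k i)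

lemma hasDerivAt_hfun (i : Fin n) (t : ℝ) :
    HasDerivAt (hfun k c i) (hfun1 k c i t) t := by
  unfold hfun hfun1
  simpa [hfun, hfun1, Function.comp_def, neg_mul] using
    (Real.hasDerivAt_cos (k i * (t - c i))).comp t (hasDerivAt_inner k c i t)

lemma hasDerivAt_hfun1 (i : Fin n) (t : ℝ) :
    HasDerivAt (hfun1 k c i) (hfun2 k c i t) t := by
  have := (((Real.hasDerivAt_sin (k i * (t - c i))).comp t
      (hasDerivAt_inner k c i t)).neg).mul_const (k i)
  unfold hfun1
  simpa [hfun1, hfun2, Function.comp] using this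

noncomputable def pr (i : Fin n) : EuclideanSpace ℝ (Fin n) →L[ℝ] ℝ :=
  EuclideanSpace.proj i

lemma pr_apply (i : Fin n) (x : EuclideanSpace ℝ (Fin n)) : pr i x = x i := rfl

-- the coordinate function has a derivative
lemma hasFDerivAt_coord (i : Fin n) (x : EuclideanSpace ℝ (Fin n)) :
    HasFDerivAt (fun y : EuclideanSpace ℝ (Fin n) => hfun k c i (y i))
      (hfun1 k c i (x i) • pr i) x := by
  have h := (hasDerivAt_hfun k c i (x i)).comp_hasFDerivAt x ((pr i).hasFDerivAt)
  exact h

end aux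

section aux2

variable {n : ℕ} (k c : Fin n → ℝ)

noncomputable def Ffun (x : EuclideanSpace ℝ (Fin n)) : EuclideanSpace ℝ (Fin n) →L[ℝ] ℝ :=
  ∑ i, ((∏ j ∈ Finset.univ.erase i, hfun k c j (x j)) * hfun1 k c i (x i)) • pr i

lemma hasFDerivAt_theta (x : EuclideanSpace ℝ (Fin n)) :
    HasFDerivAt (fun y : EuclideanSpace ℝ (Fin n) => ∏ i, hfun k c i (y i))
      (Ffun k c x) x := by
  have := HasFDerivAt.finset_prod (u := Finset.univ)
    (g := fun i (y : EuclideanSpace ℝ (Fin n)) => hfun k c i (y i))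
    (g' := fun i => hfun1 k c i (x i) • pr i)
    (fun i _ => hasFDerivAt_coord k c i x)
  refine this.congr_fderiv ?_
  unfold Ffun
  ext v
  simp [smul_smul]

lemma fderiv_theta :
    fderiv ℝ (fun y : EuclideanSpace ℝ (Fin n) => ∏ i, hfun k c i (y i)) = Ffun k c :=
  funext fun x => (hasFDerivAt_theta k c x).fderiv

noncomputable def Qfun (i : Fin n) (x : EuclideanSpace ℝ (Fin n)) :
    EuclideanSpace ℝ (Fin n) →L[ℝ] ℝ :=
  (∏ j ∈ Finset.univ.erase i, hfun k c j (x j)) • (hfun2 k c i (x i) • pr i) +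
    hfun1 k c i (x i) •
      ∑ j ∈ Finset.univ.erase i,
        (∏ l ∈ (Finset.univ.erase i).erase j, hfun k c l (x l)) • (hfun1 k c j (x j) • pr j)

lemma hasFDerivAt_F (x : EuclideanSpace ℝ (Fin n)) :
    HasFDerivAt (Ffun k c) (∑ i, (Qfun k c i x).smulRight (pr i)) x := by
  unfold Ffun
  apply HasFDerivAt.fun_sum
  intro i _
  have hA : HasFDerivAt
      (fun y : EuclideanSpace ℝ (Fin n) => ∏ j ∈ Finset.univ.erase i, hfun k c j (y j))
      (∑ j ∈ Finset.univ.erase i,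
        (∏ l ∈ (Finset.univ.erase i).erase j, hfun k c l (x l)) • (hfun1 k c j (x j) • pr j)) x :=
    HasFDerivAt.finset_prod (fun j _ => hasFDerivAt_coord k c j x)
  have hB : HasFDerivAt (fun y : EuclideanSpace ℝ (Fin n) => hfun1 k c i (y i))
      (hfun2 k c i (x i) • pr i) x := by
    have h := (hasDerivAt_hfun1 k c i (x i)).comp_hasFDerivAt x ((pr i).hasFDerivAt)
    exact h
  exact (hA.mul hB).smul_const (pr i)

lemma pr_single (m i : Fin n) :
    pr m (EuclideanSpace.single i (1 : ℝ)) = if m = i then 1 else 0 := by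
  rw [pr_apply, EuclideanSpace.single_apply]

lemma lap_theta (x : EuclideanSpace ℝ (Fin n)) :
    lap (fun y : EuclideanSpace ℝ (Fin n) => ∏ i, hfun k c i (y i)) x
      = -(∑ i, k i ^ 2) * ∏ i, hfun k c i (x i) := by
  have h2 : fderiv ℝ (fderiv ℝ (fun y : EuclideanSpace ℝ (Fin n) => ∏ i, hfun k c i (y i))) x
      = ∑ i, (Qfun k c i x).smulRight (pr i) := by
    rw [fderiv_theta]; exact (hasFDerivAt_F k c x).fderiv
  unfold lap
  rw [h2]
  have key : ∀ i : Fin n,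
      (∑ m, (Qfun k c m x).smulRight (pr m)) (EuclideanSpace.single i 1)
        (EuclideanSpace.single i 1)
      = (∏ j ∈ Finset.univ.erase i, hfun k c j (x j)) * hfun2 k c i (x i) := by
    intro i
    rw [ContinuousLinearMap.sum_apply, ContinuousLinearMap.sum_apply]
    rw [Finset.sum_eq_single i]
    · rw [ContinuousLinearMap.smulRight_apply, ContinuousLinearMap.smul_apply,
        pr_single, if_pos rfl, smul_eq_mul, mul_one]
      unfold Qfun
      rw [ContinuousLinearMap.add_apply]
      have hz : (hfun1 k c i (x i) •
          ∑ j ∈ Finset.univ.erase i,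
            (∏ l ∈ (Finset.univ.erase i).erase j, hfun k c l (x l)) •
              (hfun1 k c j (x j) • pr j)) (EuclideanSpace.single i 1) = 0 := by
        rw [ContinuousLinearMap.smul_apply, ContinuousLinearMap.sum_apply]
        rw [Finset.sum_eq_zero]
        · simp
        intro j hj
        rw [ContinuousLinearMap.smul_apply, ContinuousLinearMap.smul_apply,
          pr_single, if_neg (Finset.ne_of_mem_erase hj)]
        simp
      rw [hz, add_zero, ContinuousLinearMap.smul_apply, ContinuousLinearMap.smul_apply,
        pr_single, if_pos rfl]
      simp [smul_eq_mul]
    · intro m _ hm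
      rw [ContinuousLinearMap.smulRight_apply, ContinuousLinearMap.smul_apply,
        pr_single, if_neg hm]
      simp
    · intro h; exact absurd (Finset.mem_univ i) h
  rw [Finset.sum_congr rfl fun i _ => key i]
  have : ∀ i : Fin n, (∏ j ∈ Finset.univ.erase i, hfun k c j (x j)) * hfun2 k c i (x i)
      = -(k i ^ 2) * ∏ j, hfun k c j (x j) := by
    intro i
    have hprod : (∏ j ∈ Finset.univ.erase i, hfun k c j (x j)) * hfun k c i (x i)
        = ∏ j, hfun k c j (x j) :=
      Finset.prod_erase_mul _ _ (Finset.mem_univ i)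
    have h2i : hfun2 k c i (x i) = -(k i ^ 2) * hfun k c i (x i) := by
      unfold hfun hfun2; ring
    rw [h2i, ← hprod]; ring
  rw [Finset.sum_congr rfl fun i _ => this i, ← Finset.sum_mul]
  rw [← Finset.sum_neg_distrib]

end aux2

lemma contDiff_theta {n : ℕ} (k c : Fin n → ℝ) :
    ContDiff ℝ 2 (fun y : EuclideanSpace ℝ (Fin n) => ∏ i, hfun k c i (y i)) := by
  apply contDiff_prod
  intro i _
  have h1 : ContDiff ℝ 2 (hfun k c i) :=
    Real.contDiff_cos.comp (contDiff_const.mul (contDiff_id.sub contDiff_const))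
  exact h1.comp (pr i).contDiff

theorem box_eigenvalue_lower_bound {n : ℕ} (hn : 1 ≤ n)
    (a b : Fin n → ℝ) (hab : ∀ i, a i < b i)
    (K : Set (EuclideanSpace ℝ (Fin n)))
    (hK : K = (WithLp.ofLp : EuclideanSpace ℝ (Fin n) → (Fin n → ℝ)) ⁻¹' Set.pi Set.univ fun i => Set.Icc (a i) (b i)) :
    ∀ ε > (0 : ℝ), ∃ θ : EuclideanSpace ℝ (Fin n) → ℝ,
      ContDiff ℝ 2 θ ∧ (∀ x ∈ K, 0 < θ x) ∧
      ∀ x ∈ K, -4 * lap θ x ≥ (∑ i : Fin n, 4 * π ^ 2 / (b i - a i) ^ 2 - ε) * θ x := by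
  intro ε hε
  set L : Fin n → ℝ := fun i => b i - a i with hLdef
  have hL : ∀ i, 0 < L i := fun i => sub_pos.mpr (hab i)
  set M : ℝ := ∑ i, 4 / (L i) ^ 2 with hMdef
  have hM : 0 < M := by
    apply Finset.sum_pos
    · intro i _
      exact div_pos (by norm_num) (pow_pos (hL i) 2)
    · exact Finset.univ_nonempty_iff.mpr (Fin.pos_iff_nonempty.mp (by omega))
  set δ : ℝ := min (π / 2) (ε / (4 * π * M)) with hδdef
  have h4πM : 0 < 4 * π * M := by
    have := Real.pi_pos; nlinarith
  have hδpos : 0 < δ := lt_min (by positivity) (div_pos hε h4πM)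
  set τ : ℝ := π - δ with hτdef
  have hτpos : 0 < τ := by
    have : δ ≤ π / 2 := min_le_left _ _
    have := Real.pi_pos
    simp only [hτdef]; linarith
  have hτlt : τ < π := by simp only [hτdef]; linarith
  set k : Fin n → ℝ := fun i => τ / L i with hkdef
  set c : Fin n → ℝ := fun i => (a i + b i) / 2 with hcdef
  refine ⟨fun y => ∏ i, hfun k c i (y i), contDiff_theta k c, ?_, ?_⟩
  · -- positivity
    intro x hx
    rw [hK, Set.mem_preimage, Set.mem_univ_pi] at hx
    apply Finset.prod_pos
    intro i _
    have hxi := hx i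
    have hxa : a i ≤ x i := hxi.1
    have hxb : x i ≤ b i := hxi.2
    have habs : |x i - c i| ≤ L i / 2 := by
      rw [abs_le]
      constructor <;> (simp only [hcdef, hLdef]; linarith)
    have hki : 0 < k i := div_pos hτpos (hL i)
    have hbound : |k i * (x i - c i)| ≤ τ / 2 := by
      rw [abs_mul, abs_of_pos hki]
      calc k i * |x i - c i| ≤ k i * (L i / 2) :=
            mul_le_mul_of_nonneg_left habs hki.le
        _ = τ / 2 := by
            have hkL : k i * L i = τ := div_mul_cancel₀ _ (hL i).ne'
            have : k i * (L i / 2) = k i * L i / 2 := by ring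
            rw [this, hkL]
    apply Real.cos_pos_of_mem_Ioo
    constructor
    · have := abs_le.mp hbound
      linarith [this.1]
    · have := abs_le.mp hbound
      linarith [this.2]
  · -- eigenvalue inequality
    intro x hx
    rw [lap_theta]
    set P : ℝ := ∏ i, hfun k c i (x i) with hPdef
    have hP : 0 < P := by
      rw [hK, Set.mem_preimage, Set.mem_univ_pi] at hx
      apply Finset.prod_pos
      intro i _
      have hxi := hx i
      have habs : |x i - c i| ≤ L i / 2 := by
        rw [abs_le]
        constructor <;> (simp only [hcdef, hLdef]; linarith [hxi.1, hxi.2])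
      have hki : 0 < k i := div_pos hτpos (hL i)
      have hbound : |k i * (x i - c i)| ≤ τ / 2 := by
        rw [abs_mul, abs_of_pos hki]
        calc k i * |x i - c i| ≤ k i * (L i / 2) :=
              mul_le_mul_of_nonneg_left habs hki.le
          _ = τ / 2 := by
              have hkL : k i * L i = τ := div_mul_cancel₀ _ (hL i).ne'
              have : k i * (L i / 2) = k i * L i / 2 := by ring
              rw [this, hkL]
      apply Real.cos_pos_of_mem_Ioo
      have := abs_le.mp hbound
      constructor <;> [linarith [this.1]; linarith [this.2]]
    have hconst : (∑ i : Fin n, 4 * π ^ 2 / (b i - a i) ^ 2) - ε ≤ 4 * ∑ i, k i ^ 2 := by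
      have hterm : ∀ i : Fin n, 4 * π ^ 2 / (b i - a i) ^ 2 - 4 * k i ^ 2
          = (π ^ 2 - τ ^ 2) * (4 / (L i) ^ 2) := by
        intro i
        have hLne : L i ≠ 0 := (hL i).ne'
        simp only [hkdef, hLdef]
        field_simp
      have hsum : (∑ i : Fin n, 4 * π ^ 2 / (b i - a i) ^ 2) - 4 * ∑ i, k i ^ 2
          = (π ^ 2 - τ ^ 2) * M := by
        rw [Finset.mul_sum, ← Finset.sum_sub_distrib, hMdef, Finset.mul_sum]
        exact Finset.sum_congr rfl fun i _ => hterm i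
      have hδle : δ * (4 * π * M) ≤ ε := by
        have h1 : δ ≤ ε / (4 * π * M) := min_le_right _ _
        have h2 : 0 < 4 * π * M := by positivity
        calc δ * (4 * π * M) ≤ (ε / (4 * π * M)) * (4 * π * M) :=
              mul_le_mul_of_nonneg_right h1 h2.le
          _ = ε := div_mul_cancel₀ _ h2.ne'
      have hbig : (π ^ 2 - τ ^ 2) * M ≤ ε := by
        have hexp : π ^ 2 - τ ^ 2 = δ * (2 * π - δ) := by simp only [hτdef]; ring
        rw [hexp]
        nlinarith [hδpos.le, hM.le, mul_nonneg hδpos.le hM.le,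
          mul_nonneg (mul_nonneg hδpos.le hδpos.le) hM.le]
      rw [← hsum] at hbig
      linarith
    have : (∑ i : Fin n, 4 * π ^ 2 / (b i - a i) ^ 2 - ε) * P ≤ (4 * ∑ i, k i ^ 2) * P :=
      mul_le_mul_of_nonneg_right hconst hP.le
    calc (∑ i : Fin n, 4 * π ^ 2 / (b i - a i) ^ 2 - ε) * P
        ≤ (4 * ∑ i, k i ^ 2) * P := this
      _ = -4 * (-(∑ i, k i ^ 2) * P) := by ring

end AuxProof
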